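/- The bound in the undirected two-families theorem is tight: for any nonnegative integers a_1,...,a_d, b_1,...,b_d, there exist disjoint sets X_1,...,X_d and families A_1,...,A_h and B_1,...,B_h of subsets of X_1 ∪ ... ∪ X_d with h = Q(a_1,...,a_d,b_1,...,b_d), satisfying: A_i ∩ B_i = ∅ for all i; A_i ∩ B_j ≠ ∅ for all i < j; |B_i ∩ X_j| ≤ b_j for all i,j; and for each i there is a permutation π of [d] with |A_i ∩ X_j| ≤ a_{π(j)} for all j. -/

import Mathlib

lemma key_sum (s t : Finset ℕ) (m : ℕ) (hs : s ⊆ Finset.Icc 1 m)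
    (hcard : t.card = s.card) (hsub : ∀ x ∈ t, x ≤ m → x ∈ s) (hne : t ≠ s) :
    ∑ x ∈ s, x < ∑ x ∈ t, x := by
  classical
  set t1 := t.filter (fun x => x ≤ m) with ht1
  set t2 := t.filter (fun x => ¬ x ≤ m) with ht2
  have ht1s : t1 ⊆ s := fun x hx =>
    hsub x (Finset.mem_filter.mp hx).1 (Finset.mem_filter.mp hx).2
  have hsplit : ∑ x ∈ t1, x + ∑ x ∈ t2, x = ∑ x ∈ t, x :=
    Finset.sum_filter_add_sum_filter_not t _ _
  have hcard12 : t1.card + t2.card = t.card :=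
    Finset.card_filter_add_card_filter_not _
  have ht2ne : t2.Nonempty := by
    rcases Finset.eq_empty_or_nonempty t2 with h | h
    · exfalso; apply hne
      have h11 : t1 = t := by
        rw [ht1]; apply Finset.filter_true_of_mem; intro x hx
        by_contra hxm
        have : x ∈ t2 := Finset.mem_filter.mpr ⟨hx, hxm⟩
        simp [h] at this
      have hts : t ⊆ s := h11 ▸ ht1s
      exact Finset.eq_of_subset_of_card_le hts (le_of_eq hcard.symm)
    · exact h
  have hc2 : t2.card = (s \ t1).card := by
    have : (s \ t1).card = s.card - t1.card := Finset.card_sdiff_of_subset ht1s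
    have hle := Finset.card_le_card ht1s
    omega
  have h1 : ∑ x ∈ s \ t1, x ≤ m * (s \ t1).card := by
    calc ∑ x ∈ s \ t1, x ≤ (s \ t1).card • m :=
          Finset.sum_le_card_nsmul _ _ _ (fun x hx =>
            (Finset.mem_Icc.mp (hs (Finset.mem_sdiff.mp hx).1)).2)
      _ = m * (s \ t1).card := by rw [smul_eq_mul, Nat.mul_comm]
  have h2 : (m + 1) * t2.card ≤ ∑ x ∈ t2, x := by
    calc (m + 1) * t2.card = t2.card • (m + 1) := by rw [smul_eq_mul, Nat.mul_comm]
      _ ≤ ∑ x ∈ t2, x := Finset.card_nsmul_le_sum _ _ _ (fun x hx => by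
          have := (Finset.mem_filter.mp hx).2; omega)
  have hssum : ∑ x ∈ s, x = ∑ x ∈ t1, x + ∑ x ∈ s \ t1, x := by
    have := Finset.sum_sdiff (f := id) ht1s
    simp only [id] at this
    omega
  have hmul : m * t2.card < (m + 1) * t2.card := by
    have hc := Finset.card_pos.mpr ht2ne
    nlinarith
  calc ∑ x ∈ s, x = ∑ x ∈ t1, x + ∑ x ∈ s \ t1, x := hssum
    _ ≤ ∑ x ∈ t1, x + m * t2.card := by rw [hc2]; omega
    _ < ∑ x ∈ t1, x + (m + 1) * t2.card := by omega
    _ ≤ ∑ x ∈ t1, x + ∑ x ∈ t2, x := by omega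
    _ = ∑ x ∈ t, x := hsplit

lemma eq_of_image_snd_eq {d : ℕ} {k : Fin d} {s t : Finset (Fin d × ℕ)}
    (hs : ∀ u ∈ s, u.1 = k) (ht : ∀ u ∈ t, u.1 = k)
    (h : s.image Prod.snd = t.image Prod.snd) : s = t := by
  have key : ∀ (s t : Finset (Fin d × ℕ)), (∀ u ∈ s, u.1 = k) → (∀ u ∈ t, u.1 = k) →
      s.image Prod.snd = t.image Prod.snd → s ⊆ t := by
    intro s t hs ht h u hu
    have h2 : u.2 ∈ t.image Prod.snd := h ▸ Finset.mem_image_of_mem _ hu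
    obtain ⟨v, hv, hv2⟩ := Finset.mem_image.mp h2
    have : v = u := Prod.ext (by rw [ht v hv, hs u hu]) hv2
    exact this ▸ hv
  exact le_antisymm (key s t hs ht h) (key t s ht hs h.symm)



/-- `Q(a_1,…,a_d,b_1,…,b_d)`: with `a = max_i a_i` and disjoint sets
`U_i = {i} × [a+b_i]`, the number of sets `S ⊆ U_1 ∪ … ∪ U_d` for which
there is a permutation `π` of `[d]` such that `S ∩ U_i` is a subset of
`[a_{π(i)} + b_i]` of size `b_i`, for every `i`. -/
def QQ (d : ℕ) (a b : Fin d → ℕ) : ℕ :=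
  (((Finset.univ : Finset (Fin d)).biUnion fun i =>
      (Finset.Icc 1 (Finset.univ.sup a + b i)).image fun x => (i, x)).powerset.filter
    fun S => ∃ π : Equiv.Perm (Fin d), ∀ i,
      ((S.filter fun u => u.1 = i).image Prod.snd ⊆ Finset.Icc 1 (a (π i) + b i)) ∧
      (S.filter fun u => u.1 = i).card = b i).card

/-- Tightness of the undirected two-families theorem: there exist pairwise
disjoint sets `X_1,…,X_d` and families `A_1,…,A_h`, `B_1,…,B_h` of subsets
of `X_1 ∪ … ∪ X_d` with `h = Q(a_1,…,a_d,b_1,…,b_d)` satisfying all four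
conditions. -/
theorem two_families_tight (d : ℕ) (a b : Fin d → ℕ) :
    ∃ (X : Fin d → Finset ℕ) (A B : Fin (QQ d a b) → Finset ℕ),
      (∀ i j, i ≠ j → Disjoint (X i) (X j)) ∧
      (∀ i, A i ⊆ Finset.univ.biUnion X) ∧
      (∀ i, B i ⊆ Finset.univ.biUnion X) ∧
      (∀ i, A i ∩ B i = ∅) ∧
      (∀ i j, i < j → (A i ∩ B j).Nonempty) ∧
      (∀ i j, (B i ∩ X j).card ≤ b j) ∧
      (∀ i, ∃ π : Equiv.Perm (Fin d), ∀ j, (A i ∩ X j).card ≤ a (π j)) := by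
  classical
  set U : Fin d → Finset (Fin d × ℕ) := fun i =>
    (Finset.Icc 1 (Finset.univ.sup a + b i)).image fun x => (i, x) with hU
  set P : Finset (Fin d × ℕ) → Prop := fun S => ∃ π : Equiv.Perm (Fin d), ∀ i,
      ((S.filter fun u => u.1 = i).image Prod.snd ⊆ Finset.Icc 1 (a (π i) + b i)) ∧
      (S.filter fun u => u.1 = i).card = b i with hPdef
  set 𝒮 := ((Finset.univ : Finset (Fin d)).biUnion U).powerset.filter P with h𝒮
  have hQ : QQ d a b = 𝒮.card := rfl
  set w : Finset (Fin d × ℕ) → ℕ := fun S => ∑ u ∈ S, u.2 with hw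
  set L := 𝒮.toList.mergeSort (fun S S' => decide (w S' ≤ w S)) with hL
  have hperm : L.Perm 𝒮.toList := List.mergeSort_perm _ _
  have hlen : L.length = QQ d a b := by rw [hperm.length_eq, Finset.length_toList]; exact hQ.symm
  have hnodup : L.Nodup := hperm.nodup_iff.mpr 𝒮.nodup_toList
  have hsorted : List.Pairwise (fun S S' => w S' ≤ w S) L := by
    have h := List.pairwise_mergeSort (le := fun S S' : Finset (Fin d × ℕ) => decide (w S' ≤ w S))
      (fun x y z hxy hyz => by simp_all; omega)
      (fun x y => by simpa using Nat.le_total (w y) (w x)) 𝒮.toList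
    rw [← hL] at h
    exact h.imp (fun h => by simpa using h)
  -- the chosen sets
  set Sg : Fin (QQ d a b) → Finset (Fin d × ℕ) :=
    fun i => L.get ⟨i.val, by rw [hlen]; exact i.isLt⟩ with hSg
  have hSg𝒮 : ∀ i, Sg i ∈ 𝒮 := by
    intro i
    have := List.get_mem L ⟨i.val, by rw [hlen]; exact i.isLt⟩
    exact Finset.mem_toList.mp (hperm.mem_iff.mp this)
  have hSgsub : ∀ i, Sg i ⊆ Finset.univ.biUnion U := fun i =>
    Finset.mem_powerset.mp (Finset.mem_filter.mp (hSg𝒮 i)).1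
  have hSgP : ∀ i, P (Sg i) := fun i => (Finset.mem_filter.mp (hSg𝒮 i)).2
  set π : Fin (QQ d a b) → Equiv.Perm (Fin d) := fun i => (hSgP i).choose with hπdef
  have hπ : ∀ i k,
      (((Sg i).filter fun u => u.1 = k).image Prod.snd ⊆ Finset.Icc 1 (a (π i k) + b k)) ∧
      ((Sg i).filter fun u => u.1 = k).card = b k := fun i => (hSgP i).choose_spec
  have hSgne : ∀ i j : Fin (QQ d a b), i ≠ j → Sg i ≠ Sg j := by
    intro i j hij h
    have hinj := List.nodup_iff_injective_get.mp hnodup h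
    exact hij (by
      have := congrArg Fin.val hinj
      exact Fin.ext this)
  have hwle : ∀ i j : Fin (QQ d a b), i < j → w (Sg j) ≤ w (Sg i) := by
    intro i j hij
    exact List.pairwise_iff_get.mp hsorted _ _ (by exact hij)
  -- encoding
  set f : Fin d × ℕ → ℕ := fun u => Nat.pair u.1.val u.2 with hf
  have hfinj : Function.Injective f := by
    intro u v h
    simp only [hf, Nat.pair_eq_pair] at h
    exact Prod.ext (Fin.val_injective h.1) h.2
  set enc : Finset (Fin d × ℕ) → Finset ℕ := fun s => s.image f with henc
  have henccard : ∀ s, (enc s).card = s.card := fun s => Finset.card_image_of_injective _ hfinj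
  have hencinter : ∀ s t, enc s ∩ enc t = enc (s ∩ t) := fun s t =>
    (Finset.image_inter _ _ hfinj).symm
  have hencsub : ∀ {s t}, s ⊆ t → enc s ⊆ enc t := fun h => Finset.image_subset_image h
  -- T i
  set T : Fin (QQ d a b) → Finset (Fin d × ℕ) := fun i =>
    Finset.univ.biUnion fun k => (Finset.Icc 1 (a (π i k) + b k)).image fun x => (k, x) with hT
  have hUmem : ∀ (k : Fin d) (u : Fin d × ℕ),
      u ∈ U k ↔ u.1 = k ∧ 1 ≤ u.2 ∧ u.2 ≤ Finset.univ.sup a + b k := by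
    intro k u
    simp only [hU, Finset.mem_image, Finset.mem_Icc]
    constructor
    · rintro ⟨x, ⟨h1, h2⟩, rfl⟩; exact ⟨rfl, h1, h2⟩
    · rintro ⟨h0, h1, h2⟩; exact ⟨u.2, ⟨h1, h2⟩, by rw [← h0]⟩
  have hTmem : ∀ (i : Fin (QQ d a b)) (u : Fin d × ℕ),
      u ∈ T i ↔ 1 ≤ u.2 ∧ u.2 ≤ a (π i u.1) + b u.1 := by
    intro i u
    simp only [hT, Finset.mem_biUnion, Finset.mem_univ, true_and, Finset.mem_image,
      Finset.mem_Icc]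
    constructor
    · rintro ⟨k, x, ⟨h1, h2⟩, rfl⟩; exact ⟨h1, h2⟩
    · rintro ⟨h1, h2⟩; exact ⟨u.1, u.2, ⟨h1, h2⟩, rfl⟩
  have hTsub : ∀ i, T i ⊆ Finset.univ.biUnion U := by
    intro i u hu
    rw [hTmem] at hu
    rw [Finset.mem_biUnion]
    exact ⟨u.1, Finset.mem_univ _, (hUmem u.1 u).mpr
      ⟨rfl, hu.1, le_trans hu.2 (by
        have := Finset.le_sup (f := a) (Finset.mem_univ (π i u.1))
        omega)⟩⟩
  have hbnd : ∀ i u, u ∈ Sg i → 1 ≤ u.2 ∧ u.2 ≤ Finset.univ.sup a + b u.1 := by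
    intro i u hu
    have := hSgsub i hu
    rw [Finset.mem_biUnion] at this
    obtain ⟨k, -, hk⟩ := this
    rw [hUmem] at hk
    obtain ⟨h1, h2, h3⟩ := hk
    exact ⟨h2, by rw [h1]; exact h3⟩
  have hfilterU : ∀ i k, Sg i ∩ U k = (Sg i).filter (fun u => u.1 = k) := by
    intro i k
    ext u
    simp only [Finset.mem_inter, Finset.mem_filter]
    constructor
    · rintro ⟨h1, h2⟩; exact ⟨h1, ((hUmem k u).mp h2).1⟩
    · rintro ⟨h1, h2⟩
      refine ⟨h1, (hUmem k u).mpr ⟨h2, (hbnd i u h1).1, ?_⟩⟩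
      have := (hbnd i u h1).2
      rw [h2] at this
      exact this
  have hbig : Finset.univ.biUnion (fun j => enc (U j)) = enc (Finset.univ.biUnion U) := by
    rw [henc]
    exact (Finset.biUnion_image).symm
  -- main witnesses
  refine ⟨fun j => enc (U j), fun i => enc (T i \ Sg i), fun i => enc (Sg i),
    ?_, ?_, ?_, ?_, ?_, ?_, ?_⟩
  · -- X disjoint
    intro i j hij
    rw [henc, Finset.disjoint_image hfinj, Finset.disjoint_left]
    intro u hu hv
    rw [hUmem] at hu hv
    exact hij (hu.1 ▸ hv.1 ▸ rfl)
  · -- A ⊆ ∪ X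
    intro i
    rw [hbig]
    exact hencsub (le_trans (Finset.sdiff_subset) (hTsub i))
  · -- B ⊆ ∪ X
    intro i
    rw [hbig]
    exact hencsub (hSgsub i)
  · -- A ∩ B = ∅
    intro i
    rw [hencinter, Finset.sdiff_inter_self]
    rfl
  · -- cross intersections
    intro i j hij
    by_contra hcon
    rw [Finset.not_nonempty_iff_eq_empty, hencinter] at hcon
    have hempty : (T i \ Sg i) ∩ Sg j = ∅ := by
      have h0 : ((T i \ Sg i) ∩ Sg j).card = 0 := by
        rw [← henccard, hcon, Finset.card_empty]
      exact Finset.card_eq_zero.mp h0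
    have hsub' : ∀ u ∈ Sg j, u ∈ T i → u ∈ Sg i := by
      intro u hu hT'
      by_contra h
      have : u ∈ (T i \ Sg i) ∩ Sg j :=
        Finset.mem_inter.mpr ⟨Finset.mem_sdiff.mpr ⟨hT', h⟩, hu⟩
      simp [hempty] at this
    -- componentwise strict inequality
    have hkey : ∀ k : Fin d,
        ((Sg j).filter (fun u => u.1 = k) ≠ (Sg i).filter (fun u => u.1 = k)) →
        ∑ u ∈ (Sg i).filter (fun u => u.1 = k), u.2 <
          ∑ u ∈ (Sg j).filter (fun u => u.1 = k), u.2 := by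
      intro k hnefil
      have hinjS : ∀ x ∈ (Sg i).filter (fun u => u.1 = k), ∀ y ∈ (Sg i).filter (fun u => u.1 = k),
          Prod.snd x = Prod.snd y → x = y := by
        intro x hx y hy h
        exact Prod.ext (by
          rw [(Finset.mem_filter.mp hx).2, (Finset.mem_filter.mp hy).2]) h
      have hinjT : ∀ x ∈ (Sg j).filter (fun u => u.1 = k), ∀ y ∈ (Sg j).filter (fun u => u.1 = k),
          Prod.snd x = Prod.snd y → x = y := by
        intro x hx y hy h
        exact Prod.ext (by
          rw [(Finset.mem_filter.mp hx).2, (Finset.mem_filter.mp hy).2]) h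
      have hlt := key_sum (((Sg i).filter (fun u => u.1 = k)).image Prod.snd)
        (((Sg j).filter (fun u => u.1 = k)).image Prod.snd) (a (π i k) + b k)
        (hπ i k).1
        (by rw [Finset.card_image_of_injOn hinjT, Finset.card_image_of_injOn hinjS,
              (hπ i k).2, (hπ j k).2])
        (by
          intro x hx hxm
          obtain ⟨u, hu, rfl⟩ := Finset.mem_image.mp hx
          obtain ⟨huS, huk⟩ := Finset.mem_filter.mp hu
          have hu1 : 1 ≤ u.2 := (hbnd j u huS).1
          have huT : u ∈ T i := (hTmem i u).mpr ⟨hu1, by rw [huk]; exact hxm⟩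
          have huSi : u ∈ Sg i := hsub' u huS huT
          exact Finset.mem_image_of_mem _ (Finset.mem_filter.mpr ⟨huSi, huk⟩))
        (by
          intro h
          exact hnefil (eq_of_image_snd_eq
            (fun u hu => (Finset.mem_filter.mp hu).2)
            (fun u hu => (Finset.mem_filter.mp hu).2) h))
      rw [Finset.sum_image hinjS, Finset.sum_image hinjT] at hlt
      exact hlt
    have hweak : ∀ k : Fin d,
        ∑ u ∈ (Sg i).filter (fun u => u.1 = k), u.2 ≤
          ∑ u ∈ (Sg j).filter (fun u => u.1 = k), u.2 := by
      intro k
      by_cases h : (Sg j).filter (fun u => u.1 = k) = (Sg i).filter (fun u => u.1 = k)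
      · rw [h]
      · exact le_of_lt (hkey k h)
    have hex : ∃ k : Fin d, (Sg j).filter (fun u => u.1 = k) ≠ (Sg i).filter (fun u => u.1 = k) := by
      by_contra h
      push_neg at h
      apply hSgne j i (ne_of_gt hij)
      ext u
      have := h u.1
      constructor <;> intro hu
      · have : u ∈ (Sg i).filter (fun v => v.1 = u.1) := by
          rw [← h u.1]; exact Finset.mem_filter.mpr ⟨hu, rfl⟩
        exact (Finset.mem_filter.mp this).1
      · have : u ∈ (Sg j).filter (fun v => v.1 = u.1) := by
          rw [h u.1]; exact Finset.mem_filter.mpr ⟨hu, rfl⟩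
        exact (Finset.mem_filter.mp this).1
    obtain ⟨k0, hk0⟩ := hex
    have hlt : w (Sg i) < w (Sg j) := by
      have hi := Finset.sum_fiberwise (Sg i) (fun u : Fin d × ℕ => u.1) (fun u => u.2)
      have hj := Finset.sum_fiberwise (Sg j) (fun u : Fin d × ℕ => u.1) (fun u => u.2)
      have h' : ∑ u ∈ Sg i, u.2 < ∑ u ∈ Sg j, u.2 := by
        rw [← hi, ← hj]
        exact Finset.sum_lt_sum (fun k _ => hweak k) ⟨k0, Finset.mem_univ _, hkey k0 hk0⟩
      exact h'
    have := hwle i j hij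
    omega
  · -- |B ∩ X j| ≤ b j
    intro i j
    rw [hencinter, henccard, hfilterU i j, (hπ i j).2]
  · -- |A ∩ X j| ≤ a (π j)
    intro i
    refine ⟨π i, ?_⟩
    intro j
    rw [hencinter, henccard]
    set Tc : Finset (Fin d × ℕ) := (Finset.Icc 1 (a (π i j) + b j)).image fun x => (j, x) with hTc
    have hTcmem : ∀ u : Fin d × ℕ, u ∈ Tc ↔ u.1 = j ∧ 1 ≤ u.2 ∧ u.2 ≤ a (π i j) + b j := by
      intro u
      simp only [hTc, Finset.mem_image, Finset.mem_Icc]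
      constructor
      · rintro ⟨x, ⟨h1, h2⟩, rfl⟩; exact ⟨rfl, h1, h2⟩
      · rintro ⟨h0, h1, h2⟩; exact ⟨u.2, ⟨h1, h2⟩, by rw [← h0]⟩
    have hset : (T i \ Sg i) ∩ U j = Tc \ Sg i := by
      ext u
      simp only [Finset.mem_inter, Finset.mem_sdiff]
      constructor
      · rintro ⟨⟨hT', hS⟩, hUj⟩
        have h1 := (hTmem i u).mp hT'
        have h2 := ((hUmem j u).mp hUj).1
        exact ⟨(hTcmem u).mpr ⟨h2, h1.1, by rw [← h2]; exact h1.2⟩, hS⟩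
      · rintro ⟨hTc', hS⟩
        obtain ⟨h0, h1, h2⟩ := (hTcmem u).mp hTc'
        refine ⟨⟨(hTmem i u).mpr ⟨h1, by rw [h0]; exact h2⟩, hS⟩, (hUmem j u).mpr ⟨h0, h1, ?_⟩⟩
        have := Finset.le_sup (f := a) (Finset.mem_univ (π i j))
        omega
    rw [hset]
    have hTcS : Tc ∩ Sg i = (Sg i).filter (fun u => u.1 = j) := by
      ext u
      simp only [Finset.mem_inter, Finset.mem_filter]
      constructor
      · rintro ⟨h1, h2⟩; exact ⟨h2, ((hTcmem u).mp h1).1⟩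
      · rintro ⟨h1, h2⟩
        refine ⟨(hTcmem u).mpr ⟨h2, (hbnd i u h1).1, ?_⟩, h1⟩
        have := (hπ i j).1 (Finset.mem_image_of_mem Prod.snd (Finset.mem_filter.mpr ⟨h1, h2⟩))
        exact (Finset.mem_Icc.mp this).2
    have hTccard : Tc.card = a (π i j) + b j := by
      rw [hTc, Finset.card_image_of_injective _ (fun x y h => (Prod.ext_iff.mp h).2),
        Nat.card_Icc]
      omega
    have : (Tc \ Sg i).card = Tc.card - (Tc ∩ Sg i).card := by
      rw [← Finset.sdiff_inter_self_left]
      exact Finset.card_sdiff_of_subset (Finset.inter_subset_left)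
    rw [this, hTcS, (hπ i j).2, hTccard]
    omega
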